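/- Assigning |v| = 1, |e| = e, |e*| = e⁻¹ defines a grading of L(Γ) by the free group F_E on the arrow set E, and this grading is an initial object in the category of G-gradings of L(Γ) in which all generators V ⊔ E ⊔ E* are homogeneous: for any group H and any H-grading with homogeneous generators, the group homomorphism F_E → H sending e to |e|_H realizes the H-grading as a pushforward of the F_E-grading. -/

import Mathlib

/-! Preamble: digraphs, paths, and Leavitt path algebras over a commutative ring. -/

structure DGraph : Type 1 where
  V : Type
  E : Type
  s : E → V
  t : E → V

namespace DGraph

/-- Generators of the Leavitt path algebra: vertices, arrows, ghost (dual) arrows. -/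
inductive Gen (Γ : DGraph) : Type
  | vert : Γ.V → Gen Γ
  | edge : Γ.E → Gen Γ
  | ghost : Γ.E → Gen Γ

variable (Γ : DGraph)

def IsSink (v : Γ.V) : Prop := ∀ e : Γ.E, Γ.s e ≠ v

def RowFinite : Prop := ∀ v : Γ.V, {e : Γ.E | Γ.s e = v}.Finite

/-- `IsWalkFrom v l` : the list of arrows `l` forms a path starting at `v`. -/
def IsWalkFrom : Γ.V → List Γ.E → Prop
  | _, [] => True
  | v, e :: l => Γ.s e = v ∧ IsWalkFrom (Γ.t e) l

/-- Target of a walk. -/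
def walkTrg : Γ.V → List Γ.E → Γ.V
  | v, [] => v
  | _, e :: l => walkTrg (Γ.t e) l

/-- A (finite) path in `Γ`: a source vertex together with a compatible list of arrows.
A path of length 0 is a single vertex. -/
structure Path (Γ : DGraph) : Type where
  src : Γ.V
  edges : List Γ.E
  valid : Γ.IsWalkFrom src edges

variable {Γ}

def Path.trg (p : Path Γ) : Γ.V := Γ.walkTrg p.src p.edges

/-- `q` is an initial segment of `p`, i.e. `p = q r`. -/
def IsInitialSegment (q p : Path Γ) : Prop := p.src = q.src ∧ q.edges <+: p.edges

/-- A cycle: a path of positive length from a vertex back to itself with pairwise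
distinct sources of its arrows. -/
def Path.IsCycle (p : Path Γ) : Prop :=
  p.edges ≠ [] ∧ p.trg = p.src ∧ (p.edges.map Γ.s).Nodup

/-- The vertex `v` is on the path `p`. -/
def Path.OnPath (p : Path Γ) (v : Γ.V) : Prop := p.src = v ∨ ∃ e ∈ p.edges, Γ.t e = v

/-- The path `p` has no exit: every arrow whose source is on `p` is an arrow of `p`. -/
def NoExit (p : Path Γ) : Prop := ∀ f : Γ.E, p.OnPath (Γ.s f) → f ∈ p.edges

variable (Γ)

/-- There is a path from `u` to `v`. -/
def Reaches (u v : Γ.V) : Prop := ∃ p : Path Γ, p.src = u ∧ p.trg = v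

/-- The cycles of `Γ` are pairwise disjoint: two cycles sharing a vertex coincide
(up to rotation, i.e. they have the same arrows). -/
def CyclesPairwiseDisjoint : Prop :=
  ∀ C D : Path Γ, C.IsCycle → D.IsCycle → (∃ v, C.OnPath v ∧ D.OnPath v) →
    C.edges.Perm D.edges

def Hereditary (H : Set Γ.V) : Prop := ∀ u v : Γ.V, u ∈ H → Γ.Reaches u v → v ∈ H

def Saturated (H : Set Γ.V) : Prop :=
  ∀ v : Γ.V, ¬ Γ.IsSink v → {e : Γ.E | Γ.s e = v}.Finite →
    (∀ e : Γ.E, Γ.s e = v → Γ.t e ∈ H) → v ∈ H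

/-- The full subgraph of `Γ` on a set `W` of vertices. -/
abbrev restrict (W : Set Γ.V) : DGraph where
  V := W
  E := {e : Γ.E // Γ.s e ∈ W ∧ Γ.t e ∈ W}
  s e := ⟨Γ.s e.1, e.2.1⟩
  t e := ⟨Γ.t e.1, e.2.2⟩

/-- The defining relations of the Leavitt path algebra, as a relation on the free
algebra on the generators: (V), (E), (CK1) and (CK2) (the latter imposed at every
vertex which is not a sink and emits finitely many arrows). -/
inductive LRel (k : Type) [CommRing k] (Γ : DGraph) :
    FreeAlgebra k (Gen Γ) → FreeAlgebra k (Gen Γ) → Prop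
  | vert_idem (v : Γ.V) :
      LRel k Γ (FreeAlgebra.ι k (Gen.vert v) * FreeAlgebra.ι k (Gen.vert v))
        (FreeAlgebra.ι k (Gen.vert v))
  | vert_orth (v w : Γ.V) : v ≠ w →
      LRel k Γ (FreeAlgebra.ι k (Gen.vert v) * FreeAlgebra.ι k (Gen.vert w)) 0
  | edge_src (e : Γ.E) :
      LRel k Γ (FreeAlgebra.ι k (Gen.vert (Γ.s e)) * FreeAlgebra.ι k (Gen.edge e))
        (FreeAlgebra.ι k (Gen.edge e))
  | edge_trg (e : Γ.E) :
      LRel k Γ (FreeAlgebra.ι k (Gen.edge e) * FreeAlgebra.ι k (Gen.vert (Γ.t e)))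
        (FreeAlgebra.ι k (Gen.edge e))
  | ghost_src (e : Γ.E) :
      LRel k Γ (FreeAlgebra.ι k (Gen.vert (Γ.t e)) * FreeAlgebra.ι k (Gen.ghost e))
        (FreeAlgebra.ι k (Gen.ghost e))
  | ghost_trg (e : Γ.E) :
      LRel k Γ (FreeAlgebra.ι k (Gen.ghost e) * FreeAlgebra.ι k (Gen.vert (Γ.s e)))
        (FreeAlgebra.ι k (Gen.ghost e))
  | ck1_same (e : Γ.E) :
      LRel k Γ (FreeAlgebra.ι k (Gen.ghost e) * FreeAlgebra.ι k (Gen.edge e))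
        (FreeAlgebra.ι k (Gen.vert (Γ.t e)))
  | ck1_diff (e f : Γ.E) : e ≠ f →
      LRel k Γ (FreeAlgebra.ι k (Gen.ghost e) * FreeAlgebra.ι k (Gen.edge f)) 0
  | ck2 (v : Γ.V) (h : {e : Γ.E | Γ.s e = v}.Finite) (hns : ¬ Γ.IsSink v) :
      LRel k Γ (FreeAlgebra.ι k (Gen.vert v))
        (∑ e ∈ h.toFinset, FreeAlgebra.ι k (Gen.edge e) * FreeAlgebra.ι k (Gen.ghost e))

/-- The (unitized) Leavitt path algebra of `Γ` over `k`.  For a digraph with finitely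
many vertices, see `LVF` below where additionally `1 = Σ v` is imposed; in general the
Leavitt path algebra proper is the (non-unital) subalgebra spanned by the nonempty
words in the generators, cf. `lpa`. -/
abbrev LV (k : Type) [CommRing k] (Γ : DGraph) : Type := RingQuot (LRel k Γ)

/-- The image of a generator in the Leavitt path algebra. -/
def genL (k : Type) [CommRing k] (Γ : DGraph) (g : Gen Γ) : LV k Γ :=
  RingQuot.mkAlgHom k (LRel k Γ) (FreeAlgebra.ι k g)

/-- For `Γ` with finitely many vertices, the relations of the Leavitt path algebra
together with `1 = Σ_{v ∈ V} v`. -/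
def LRelU (k : Type) [CommRing k] (Γ : DGraph) [Fintype Γ.V] :
    FreeAlgebra k (Gen Γ) → FreeAlgebra k (Gen Γ) → Prop :=
  fun a b => LRel k Γ a b ∨
    (a = 1 ∧ b = ∑ v : Γ.V, FreeAlgebra.ι k (Gen.vert v))

/-- The Leavitt path algebra of a digraph with finitely many vertices (a unital
algebra, with `1 = Σ_{v ∈ V} v`). -/
abbrev LVF (k : Type) [CommRing k] (Γ : DGraph) [Fintype Γ.V] : Type :=
  RingQuot (LRelU k Γ)

def genF (k : Type) [CommRing k] (Γ : DGraph) [Fintype Γ.V] (g : Gen Γ) : LVF k Γ :=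
  RingQuot.mkAlgHom k (LRelU k Γ) (FreeAlgebra.ι k g)

section Words

variable {k : Type} [CommRing k] {A : Type} [Ring A]

/-- The element `v e₁ ⋯ e_n` of an algebra `A`, given an interpretation `g` of the
generators. -/
def wordElem (g : Gen Γ → A) (v : Γ.V) (l : List Γ.E) : A :=
  g (Gen.vert v) * (l.map fun e => g (Gen.edge e)).prod

/-- The element `e_n* ⋯ e₁* v`. -/
def wordStar (g : Gen Γ → A) (v : Γ.V) (l : List Γ.E) : A :=
  (l.reverse.map fun e => g (Gen.ghost e)).prod * g (Gen.vert v)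

variable {Γ}

/-- The element of the algebra corresponding to a path `p`. -/
def pElem (g : Gen Γ → A) (p : Path Γ) : A := wordElem Γ g p.src p.edges

/-- The element of the algebra corresponding to the dual path `p*`. -/
def pStar (g : Gen Γ → A) (p : Path Γ) : A := wordStar Γ g p.src p.edges

/-- `Cⁿ` for `n ∈ ℤ`, with `C⁰ := s(C)` and `C⁻ⁿ := (C*)ⁿ`. -/
def cycPow (g : Gen Γ → A) (C : Path Γ) (n : ℤ) : A :=
  if n = 0 then g (Gen.vert C.src)
  else if 0 < n then pElem g C ^ n.toNat
  else pStar g C ^ (-n).toNat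

end Words

/-- The k-submodule of the unitized algebra `LV k Γ` spanned by the nonempty words
in the generators: this is the Leavitt path algebra proper (a two-sided ideal). -/
def lpa (k : Type) [CommRing k] (Γ : DGraph) : Submodule k (LV k Γ) :=
  Submodule.span k
    {x : LV k Γ | ∃ l : List (Gen Γ), l ≠ [] ∧ x = (l.map (genL k Γ)).prod}

/-- The image of the path algebra `kΓ` in `LV k Γ`: the k-span of the paths. -/
def pathSpan (k : Type) [CommRing k] (Γ : DGraph) : Submodule k (LV k Γ) :=
  Submodule.span k (Set.range (pElem (genL k Γ)))

/-- The right ideal generated by an element `a` of a ring `A` (a submodule for the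
right action of `A`, i.e. an `Aᵐᵒᵖ`-submodule). -/
def rIdeal (A : Type) [Ring A] (a : A) : Submodule Aᵐᵒᵖ A :=
  Submodule.span Aᵐᵒᵖ {a}

/-- A right `LV k Γ`-module (i.e. left `(LV k Γ)ᵐᵒᵖ`-module) is unital if
`M = M ⬝ L(Γ)`, equivalently every element is a finite sum of elements of `M·v·L`. -/
def IsUnitalMod (k : Type) [CommRing k] (Γ : DGraph) (M : Type) [AddCommGroup M]
    [Module (LV k Γ)ᵐᵒᵖ M] : Prop :=
  ∀ m : M, m ∈ Submodule.span (LV k Γ)ᵐᵒᵖ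
    {x : M | ∃ (v : Γ.V) (y : M), x = (MulOpposite.op (genL k Γ (Gen.vert v))) • y}

/-- One-step reduction of `Γ` at a loopless vertex `v`: paths of length two through
`v` become new arrows, and `v` together with all arrows touching it is deleted. -/
abbrev reduceAt (v : Γ.V) (hl : ∀ e : Γ.E, Γ.s e = v → Γ.t e ≠ v) : DGraph where
  V := {u : Γ.V // u ≠ v}
  E := {e : Γ.E // Γ.s e ≠ v ∧ Γ.t e ≠ v} ⊕
       {fg : Γ.E × Γ.E // Γ.t fg.1 = v ∧ Γ.s fg.2 = v}
  s := fun x => match x with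
    | Sum.inl e => ⟨Γ.s e.1, e.2.1⟩
    | Sum.inr fg => ⟨Γ.s fg.1.1, fun h => hl fg.1.1 h fg.2.1⟩
  t := fun x => match x with
    | Sum.inl e => ⟨Γ.t e.1, e.2.2⟩
    | Sum.inr fg => ⟨Γ.t fg.1.2, fun h => hl fg.1.2 fg.2.2 h⟩

/-- The homogeneous component of degree `g` of `LV k Γ` with respect to a degree
assignment `d` on the generators, with values in a group `G`. -/
def gcomp (k : Type) [CommRing k] (Γ : DGraph) {G : Type} [Group G]
    (d : Gen Γ → G) (g : G) : Submodule k (LV k Γ) :=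
  Submodule.span k
    {x : LV k Γ | ∃ l : List (Gen Γ), (l.map d).prod = g ∧ x = (l.map (genL k Γ)).prod}

/-- The universal degree assignment, with values in the free group on the arrows. -/
def dUniv (Γ : DGraph) : Gen Γ → FreeGroup Γ.E
  | Gen.vert _ => 1
  | Gen.edge e => FreeGroup.of e
  | Gen.ghost e => (FreeGroup.of e)⁻¹

end DGraph

/-- Gelfand–Kirillov dimension of an `F`-algebra (value in `ℝ≥0∞`):
`limsup_n log dim(Wⁿ)/log n` for a finite-dimensional generating subspace `W`
containing `1` (the supremum is taken over all such `W`; for a finitely generated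
algebra the value does not depend on the choice). -/
noncomputable def gkDim (F A : Type) [Field F] [Ring A] [Algebra F A] : ENNReal :=
  ⨆ W : {W : Submodule F A //
      FiniteDimensional F W ∧ (1 : A) ∈ W ∧ ∀ x : A, ∃ n : ℕ, x ∈ (W : Submodule F A) ^ n},
    Filter.limsup (fun n : ℕ =>
      ENNReal.ofReal
        (Real.log (Module.finrank F ↥((W : Submodule F A) ^ n)) / Real.log n))
      Filter.atTop

/-- A module is indecomposable if it is nonzero and admits no nontrivial direct sum
decomposition. -/
def IsIndecomposableModule (R M : Type) [Ring R] [AddCommGroup M] [Module R M] : Prop :=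
  Nontrivial M ∧ ∀ A B : Submodule R M, IsCompl A B → A = ⊥ ∨ B = ⊥

/-! ### Auxiliary material for the universal grading theorem -/

section UniversalGradingAux

open DGraph

variable (k : Type) [CommRing k] (Γ : DGraph)

theorem genL_key {a b : FreeAlgebra k (Gen Γ)} (h : LRel k Γ a b) :
    RingQuot.mkAlgHom k (LRel k Γ) a = RingQuot.mkAlgHom k (LRel k Γ) b :=
  RingQuot.mkAlgHom_rel k h

/-- The coaction `LV k Γ → LV k Γ [F_E]` sending a generator `g` to `g ⊗ |g|`. -/
noncomputable def PhiGr : LV k Γ →ₐ[k] MonoidAlgebra (LV k Γ) (FreeGroup Γ.E) :=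
  RingQuot.liftAlgHom k ⟨FreeAlgebra.lift k
    (fun g => MonoidAlgebra.single (dUniv Γ g) (genL k Γ g)), by
    intro a b r
    induction r with
    | vert_idem v =>
        simp only [map_mul, FreeAlgebra.lift_ι_apply, MonoidAlgebra.single_mul_single,
          dUniv, one_mul]
        congr 1
        simp only [genL, ← map_mul]
        exact genL_key k Γ (LRel.vert_idem v)
    | vert_orth v w hvw =>
        simp only [map_mul, FreeAlgebra.lift_ι_apply, MonoidAlgebra.single_mul_single,
          map_zero]
        have : genL k Γ (Gen.vert v) * genL k Γ (Gen.vert w) = 0 := by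
          simp only [genL, ← map_mul]
          rw [genL_key k Γ (LRel.vert_orth v w hvw), map_zero]
        rw [this, MonoidAlgebra.single_zero]
    | edge_src e =>
        simp only [map_mul, FreeAlgebra.lift_ι_apply, MonoidAlgebra.single_mul_single,
          dUniv, one_mul]
        congr 1
        simp only [genL, ← map_mul]
        exact genL_key k Γ (LRel.edge_src e)
    | edge_trg e =>
        simp only [map_mul, FreeAlgebra.lift_ι_apply, MonoidAlgebra.single_mul_single,
          dUniv, mul_one]
        congr 1
        simp only [genL, ← map_mul]
        exact genL_key k Γ (LRel.edge_trg e)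
    | ghost_src e =>
        simp only [map_mul, FreeAlgebra.lift_ι_apply, MonoidAlgebra.single_mul_single,
          dUniv, one_mul]
        congr 1
        simp only [genL, ← map_mul]
        exact genL_key k Γ (LRel.ghost_src e)
    | ghost_trg e =>
        simp only [map_mul, FreeAlgebra.lift_ι_apply, MonoidAlgebra.single_mul_single,
          dUniv, mul_one]
        congr 1
        simp only [genL, ← map_mul]
        exact genL_key k Γ (LRel.ghost_trg e)
    | ck1_same e =>
        simp only [map_mul, FreeAlgebra.lift_ι_apply, MonoidAlgebra.single_mul_single,
          dUniv, inv_mul_cancel]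
        congr 1
        simp only [genL, ← map_mul]
        exact genL_key k Γ (LRel.ck1_same e)
    | ck1_diff e f hef =>
        simp only [map_mul, FreeAlgebra.lift_ι_apply, MonoidAlgebra.single_mul_single,
          map_zero]
        have : genL k Γ (Gen.ghost e) * genL k Γ (Gen.edge f) = 0 := by
          simp only [genL, ← map_mul]
          rw [genL_key k Γ (LRel.ck1_diff e f hef), map_zero]
        rw [this, MonoidAlgebra.single_zero]
    | ck2 v h hns =>
        simp only [map_sum, map_mul, FreeAlgebra.lift_ι_apply,
          MonoidAlgebra.single_mul_single, dUniv, mul_inv_cancel]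
        rw [show (∑ x ∈ h.toFinset, MonoidAlgebra.single (1 : FreeGroup Γ.E) (genL k Γ (Gen.edge x) * genL k Γ (Gen.ghost x))) = MonoidAlgebra.single 1 (∑ x ∈ h.toFinset, genL k Γ (Gen.edge x) * genL k Γ (Gen.ghost x)) from (map_sum (MonoidAlgebra.singleAddHom (1 : FreeGroup Γ.E)) _ _).symm]
        congr 1
        simp only [genL, ← map_mul, ← map_sum]
        exact genL_key k Γ (LRel.ck2 v h hns)⟩

theorem PhiGr_genL (g : Gen Γ) :
    PhiGr k Γ (genL k Γ g) = MonoidAlgebra.single (dUniv Γ g) (genL k Γ g) := by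
  rw [genL, PhiGr, RingQuot.liftAlgHom_mkAlgHom_apply, FreeAlgebra.lift_ι_apply]
  rfl

theorem PhiGr_word (l : List (Gen Γ)) :
    PhiGr k Γ ((l.map (genL k Γ)).prod) =
      MonoidAlgebra.single ((l.map (dUniv Γ)).prod) ((l.map (genL k Γ)).prod) := by
  induction l with
  | nil => simp [MonoidAlgebra.one_def]
  | cons g l ih =>
      simp only [List.map_cons, List.prod_cons, map_mul, ih, PhiGr_genL,
        MonoidAlgebra.single_mul_single]

theorem PhiGr_gcomp {g : FreeGroup Γ.E} {x : LV k Γ}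
    (hx : x ∈ gcomp k Γ (dUniv Γ) g) :
    PhiGr k Γ x = MonoidAlgebra.single g x := by
  induction hx using Submodule.span_induction with
  | mem x hx =>
      obtain ⟨l, hl, rfl⟩ := hx
      rw [PhiGr_word, hl]
  | zero => simp
  | add x y _ _ hx hy => rw [map_add, hx, hy, MonoidAlgebra.single_add]
  | smul c x _ hx =>
      rw [map_smul, hx, Algebra.smul_def, Algebra.smul_def, MonoidAlgebra.coe_algebraMap,
        Function.comp_apply, MonoidAlgebra.single_mul_single, one_mul]

theorem word_mem_gcomp {G : Type} [Group G] (d : Gen Γ → G) (l : List (Gen Γ)) :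
    (l.map (genL k Γ)).prod ∈ gcomp k Γ d ((l.map d).prod) :=
  Submodule.subset_span ⟨l, rfl, rfl⟩

theorem list_lift (L : List (LV k Γ)) (h : ∀ z ∈ L, z ∈ Set.range (genL k Γ)) :
    ∃ l : List (Gen Γ), L = l.map (genL k Γ) := by
  induction L with
  | nil => exact ⟨[], rfl⟩
  | cons a L ih =>
      obtain ⟨g, hg⟩ := h a List.mem_cons_self
      obtain ⟨l, hl⟩ := ih (fun z hz => h z (List.mem_cons_of_mem a hz))
      exact ⟨g :: l, by rw [List.map_cons, hg.symm, hl]⟩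

/-- The projection onto the degree-`g` component, via the coaction. -/
noncomputable def piGr (g : FreeGroup Γ.E) : LV k Γ →ₗ[k] LV k Γ where
  toFun x := (PhiGr k Γ x).coeff g
  map_add' x y := by
    show (PhiGr k Γ (x + y)).coeff g = (PhiGr k Γ x).coeff g + (PhiGr k Γ y).coeff g
    rw [map_add, MonoidAlgebra.coeff_add, Finsupp.add_apply]
  map_smul' c x := by
    show (PhiGr k Γ (c • x)).coeff g = c • (PhiGr k Γ x).coeff g
    rw [map_smul, MonoidAlgebra.coeff_smul_apply]

theorem univ_internal :
    letI := Classical.decEq (FreeGroup Γ.E);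
    DirectSum.IsInternal fun g : FreeGroup Γ.E => gcomp k Γ (dUniv Γ) g := by
  letI := Classical.decEq (FreeGroup Γ.E)
  rw [DirectSum.isInternal_submodule_iff_iSupIndep_and_iSup_eq_top]
  constructor
  · rw [iSupIndep_def]
    intro g
    rw [Submodule.disjoint_def]
    intro x hxg hxrest
    have h1 : PhiGr k Γ x = MonoidAlgebra.single g x := PhiGr_gcomp k Γ hxg
    have hle : (⨆ (g') (_ : g' ≠ g), gcomp k Γ (dUniv Γ) g') ≤
        LinearMap.ker (piGr k Γ g) := by
      refine iSup_le fun g' => iSup_le fun hg' => fun y hy => ?_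
      simp only [LinearMap.mem_ker, piGr, LinearMap.coe_mk, AddHom.coe_mk]
      rw [PhiGr_gcomp k Γ hy]
      rw [MonoidAlgebra.coeff_single]
      exact Finsupp.single_eq_of_ne' hg'
    have h2 := hle hxrest
    rw [LinearMap.mem_ker] at h2
    have h3 : (PhiGr k Γ x).coeff g = 0 := h2
    rw [h1, MonoidAlgebra.coeff_single, Finsupp.single_eq_same] at h3
    exact h3
  · rw [eq_top_iff]
    rintro x -
    have hx : x ∈ Algebra.adjoin k (Set.range (genL k Γ)) := by
      obtain ⟨y, rfl⟩ := RingQuot.mkAlgHom_surjective k (LRel k Γ) x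
      have hy : y ∈ Algebra.adjoin k (Set.range (FreeAlgebra.ι k : Gen Γ → FreeAlgebra k (Gen Γ))) := by
        rw [FreeAlgebra.adjoin_range_ι]; trivial
      have hmem : RingQuot.mkAlgHom k (LRel k Γ) y ∈
          (Algebra.adjoin k
            (Set.range (FreeAlgebra.ι k : Gen Γ → FreeAlgebra k (Gen Γ)))).map
            (RingQuot.mkAlgHom k (LRel k Γ)) :=
        Subalgebra.mem_map.mpr ⟨y, hy, rfl⟩
      rwa [AlgHom.map_adjoin, ← Set.range_comp] at hmem
    rw [← Subalgebra.mem_toSubmodule, Algebra.adjoin_eq_span] at hx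
    induction hx using Submodule.span_induction with
    | mem y hy =>
        obtain ⟨L, hL, rfl⟩ := Submonoid.exists_list_of_mem_closure hy
        obtain ⟨l, rfl⟩ := list_lift k Γ L hL
        exact Submodule.mem_iSup_of_mem ((l.map (dUniv Γ)).prod)
          (word_mem_gcomp k Γ (dUniv Γ) l)
    | zero => exact Submodule.zero_mem _
    | add a b _ _ ha hb => exact Submodule.add_mem _ ha hb
    | smul c a _ ha => exact Submodule.smul_mem _ c ha

end UniversalGradingAux

open DGraph in
theorem universal_grading_initial (k : Type) [CommRing k] (Γ : DGraph)
    {H : Type} [Group H] (dH : Gen Γ → H)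
    (h1 : ∀ v : Γ.V, dH (Gen.vert v) = 1)
    (h2 : ∀ e : Γ.E, dH (Gen.ghost e) = (dH (Gen.edge e))⁻¹)
    (hgr : letI := Classical.decEq H;
      DirectSum.IsInternal fun h : H => gcomp k Γ dH h) :
    (letI := Classical.decEq (FreeGroup Γ.E);
      DirectSum.IsInternal fun g : FreeGroup Γ.E => gcomp k Γ (dUniv Γ) g) ∧
    ∃ φ : FreeGroup Γ.E →* H,
      (∀ g : Gen Γ, φ (dUniv Γ g) = dH g) ∧
      (∀ h : H, gcomp k Γ dH h = ⨆ g ∈ φ ⁻¹' {h}, gcomp k Γ (dUniv Γ) g) := by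
  refine ⟨univ_internal k Γ, FreeGroup.lift (fun e => dH (Gen.edge e)), ?_, ?_⟩
  case refine_1 =>
    intro g
    cases g with
    | vert v => simp [dUniv, h1]
    | edge e => simp [dUniv]
    | ghost e => simp [dUniv, h2]
  case refine_2 =>
    set φ := FreeGroup.lift (fun e => dH (Gen.edge e)) with hφdef
    have hφ : ∀ g : Gen Γ, φ (dUniv Γ g) = dH g := by
      intro g
      cases g with
      | vert v => simp [dUniv, h1, hφdef]
      | edge e => simp [dUniv, hφdef]
      | ghost e => simp [dUniv, h2, hφdef]
    have hword : ∀ l : List (Gen Γ), φ ((l.map (dUniv Γ)).prod) = (l.map dH).prod := by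
      intro l
      rw [map_list_prod, List.map_map]
      congr 1
      exact List.map_congr_left fun g _ => hφ g
    intro h
    apply le_antisymm
    · rw [gcomp, Submodule.span_le]
      rintro x ⟨l, hl, rfl⟩
      have hg : (l.map (dUniv Γ)).prod ∈ φ ⁻¹' {h} := by
        simp only [Set.mem_preimage, Set.mem_singleton_iff, hword l, hl]
      have hle : gcomp k Γ (dUniv Γ) ((l.map (dUniv Γ)).prod) ≤
          ⨆ g ∈ φ ⁻¹' {h}, gcomp k Γ (dUniv Γ) g :=
        le_iSup₂_of_le ((l.map (dUniv Γ)).prod) hg le_rfl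
      exact hle (word_mem_gcomp k Γ (dUniv Γ) l)
    · refine iSup₂_le fun g hg => ?_
      rw [gcomp, Submodule.span_le]
      rintro x ⟨l, hl, rfl⟩
      refine Submodule.subset_span ⟨l, ?_, rfl⟩
      rw [← hword l, hl]
      exact hg
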